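/- Let 0 < ρ < 1, x* = ρ/(1−ρ), and for n, m ∈ ℕ define E_m(n) = (1−ρ)^{m+1}·ρ^n·∏_{k=1}^{n} (1 + m/k). Then for every fixed r ∈ ℝ, with n_A = ⌊A·x* + r·√A⌋ for A ∈ ℕ, one has lim_{A→∞} √(2πA)·E_A(n_A) = ((1−ρ)/√ρ)·exp( −(1−ρ)²·r²/(2ρ) ); that is, the occupancy of the processor-sharing queue with A permanent customers satisfies a Gaussian local limit theorem around A·x* with variance A·ρ/(1−ρ)². -/

import Mathlib

noncomputable section

open Real Filter Set Topology

/-- Stationary probability of `n` customers in the single-server PS queue with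
`m` permanent customers: `E_m(n) = (1−ρ)^{m+1} ρ^n ∏_{k=1}^n (1 + m/k)`. -/
def Estat (ρ : ℝ) (m n : ℕ) : ℝ :=
  (1 - ρ) ^ (m + 1) * ρ ^ n * ∏ k ∈ Finset.Icc 1 n, (1 + (m : ℝ) / k)

open scoped Nat

def st (n : ℕ) : ℝ := (n ! : ℝ) / (Real.sqrt (2*π*n) * ((n:ℝ) / Real.exp 1)^n)

lemma st_eq (n : ℕ) : st n = Stirling.stirlingSeq n / Real.sqrt π := by
  have h2 : Real.sqrt (2*π*(n:ℝ)) = Real.sqrt π * Real.sqrt (2*(n:ℝ)) := by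
    rw [← Real.sqrt_mul pi_pos.le]; ring_nf
  rw [st, Stirling.stirlingSeq, h2, div_div]
  ring_nf

lemma st_tendsto : Tendsto st atTop (𝓝 1) := by
  have h := Stirling.tendsto_stirlingSeq_sqrt_pi.div_const (Real.sqrt π)
  have hπ : Real.sqrt π ≠ 0 := ne_of_gt (Real.sqrt_pos.mpr pi_pos)
  have he : st = fun n => Stirling.stirlingSeq n / Real.sqrt π := funext st_eq
  rw [he]
  simpa [div_self hπ] using h

lemma st_pos {n : ℕ} (hn : 1 ≤ n) : 0 < st n := by
  have hn' : (0:ℝ) < n := by exact_mod_cast hn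
  have : (0:ℝ) < (n ! : ℝ) := by exact_mod_cast n.factorial_pos
  unfold st
  positivity

lemma factorial_st {n : ℕ} (hn : 1 ≤ n) :
    ((n)! : ℝ) = st n * (Real.sqrt (2*π*n) * ((n:ℝ)/Real.exp 1)^n) := by
  have hn' : (0:ℝ) < n := by exact_mod_cast hn
  rw [st, div_mul_cancel₀]
  positivity

lemma prod_eq_choose (A n : ℕ) :
    ∏ k ∈ Finset.Icc 1 n, (1 + (A:ℝ)/k) = ((n+A).choose n : ℝ) := by
  induction n with
  | zero => simp
  | succ n ih =>
    rw [Finset.prod_Icc_succ_top (by omega : 1 ≤ n + 1), ih]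
    have key : (n+A+1) * ((n+A).choose n) = ((n+A+1).choose (n+1)) * (n+1) := by
      simpa [Nat.succ_eq_add_one] using Nat.add_one_mul_choose_eq (n+A) n
    have hn1 : ((n:ℝ)+1) ≠ 0 := by positivity
    have key' : (n+A+1) * ((n+A).choose n) = ((n+1+A).choose (n+1)) * (n+1) := by
      rw [show n+1+A = n+A+1 from by omega]; exact key
    have keyR : ((n:ℝ)+A+1) * ((n+A).choose n : ℝ) = (((n+1+A).choose (n+1)) : ℝ) * ((n:ℝ)+1) := by
      exact_mod_cast key'
    push_cast
    field_simp
    linarith [keyR]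
open scoped Nat

def phiF (ρ x : ℝ) : ℝ :=
  x * Real.log ρ + (1+x) * Real.log (1+x) - x * Real.log x + Real.log (1-ρ)

def phiD (ρ x : ℝ) : ℝ := Real.log ρ + Real.log (1+x) - Real.log x

lemma hasDerivAt_phiF {ρ x : ℝ} (hx : 0 < x) : HasDerivAt (phiF ρ) (phiD ρ x) x := by
  have h1 : HasDerivAt (fun x : ℝ => x * Real.log ρ) (Real.log ρ) x := by
    simpa using (hasDerivAt_id x).mul_const (Real.log ρ)
  have h2 : HasDerivAt (fun x : ℝ => (1+x) * Real.log (1+x)) ((Real.log (1+x) + 1) * 1) x := by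
    exact (Real.hasDerivAt_mul_log (by positivity : (1:ℝ)+x ≠ 0)).comp x
      (by simpa using (hasDerivAt_id x).const_add (1:ℝ))
  have h3 : HasDerivAt (fun x : ℝ => x * Real.log x) (Real.log x + 1) x :=
    Real.hasDerivAt_mul_log (ne_of_gt hx)
  have := ((h1.add h2).sub h3).add_const (Real.log (1-ρ))
  refine this.congr_deriv ?_
  rw [phiD]; ring

lemma hasDerivAt_phiD {ρ x : ℝ} (hx : 0 < x) :
    HasDerivAt (phiD ρ) (1/(1+x) - 1/x) x := by
  have h2 : HasDerivAt (fun x : ℝ => Real.log (1+x)) ((1+x)⁻¹ * 1) x :=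
    (Real.hasDerivAt_log (by positivity)).comp x
      (by simpa using (hasDerivAt_id x).const_add (1:ℝ))
  have h3 : HasDerivAt (fun x : ℝ => Real.log x) x⁻¹ x := Real.hasDerivAt_log (ne_of_gt hx)
  have := (h2.const_add (Real.log ρ)).sub h3
  refine this.congr_deriv ?_
  ring

lemma xstar_pos {ρ : ℝ} (hρ0 : 0 < ρ) (hρ1 : ρ < 1) : 0 < ρ / (1-ρ) := div_pos hρ0 (by linarith)

lemma one_add_xstar {ρ : ℝ} (hρ0 : 0 < ρ) (hρ1 : ρ < 1) : 1 + ρ/(1-ρ) = (1-ρ)⁻¹ := by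
  have h1 : (1:ℝ) - ρ ≠ 0 := by intro h; linarith
  field_simp
  ring

lemma phiF_xstar {ρ : ℝ} (hρ0 : 0 < ρ) (hρ1 : ρ < 1) : phiF ρ (ρ/(1-ρ)) = 0 := by
  have h1 : (1:ℝ) - ρ ≠ 0 := by intro h; linarith
  have h2 : ρ ≠ 0 := ne_of_gt hρ0
  rw [phiF, one_add_xstar hρ0 hρ1, Real.log_inv,
    show ρ/(1-ρ) = ρ * (1-ρ)⁻¹ by ring,
    Real.log_mul h2 (inv_ne_zero h1), Real.log_inv]
  have h3 : ρ * (1 - ρ)⁻¹ - (1 - ρ)⁻¹ + 1 = 0 := by field_simp; ring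
  linear_combination Real.log (1-ρ) * h3

lemma phiD_xstar {ρ : ℝ} (hρ0 : 0 < ρ) (hρ1 : ρ < 1) : phiD ρ (ρ/(1-ρ)) = 0 := by
  have h1 : (1:ℝ) - ρ ≠ 0 := by intro h; linarith
  have h2 : ρ ≠ 0 := ne_of_gt hρ0
  rw [phiD, one_add_xstar hρ0 hρ1, Real.log_inv,
    show ρ/(1-ρ) = ρ * (1-ρ)⁻¹ by ring,
    Real.log_mul h2 (inv_ne_zero h1), Real.log_inv]
  ring

lemma phiD2_xstar {ρ : ℝ} (hρ0 : 0 < ρ) (hρ1 : ρ < 1) : 1/(1 + ρ/(1-ρ)) - 1/(ρ/(1-ρ)) = -((1-ρ)^2/ρ) := by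
  have h1 : (1:ℝ) - ρ ≠ 0 := by intro h; linarith
  have h2 : ρ ≠ 0 := ne_of_gt hρ0
  rw [one_add_xstar hρ0 hρ1]
  field_simp
  ring


lemma tendsto_ratio {ρ : ℝ} (hρ0 : 0 < ρ) (hρ1 : ρ < 1) :
    Tendsto (fun h => phiF ρ (ρ/(1-ρ) + h) / h^2) (𝓝[≠] (0:ℝ))
      (𝓝 (-((1-ρ)^2/ρ)/2)) := by
  set x := ρ/(1-ρ) with hxdef
  have hx : 0 < x := xstar_pos hρ0 hρ1
  have hpos : ∀ᶠ h in 𝓝 (0:ℝ), 0 < x + h := by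
    have : Tendsto (fun h : ℝ => x + h) (𝓝 0) (𝓝 x) := by
      simpa using (continuous_add_left x).tendsto (0:ℝ)
    exact this.eventually (eventually_gt_nhds hx)
  have Hf : ∀ {h : ℝ}, 0 < x + h →
      HasDerivAt (fun t => phiF ρ (x + t)) (phiD ρ (x + h)) h := by
    intro h hp
    simpa [Function.comp_def] using (hasDerivAt_phiF hp).comp h ((hasDerivAt_id h).const_add x)
  have HD : HasDerivAt (fun h => phiD ρ (x + h)) (-((1-ρ)^2/ρ)) 0 := by
    have hx0 : (0:ℝ) < x + 0 := by simpa using hx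
    have H0 := (hasDerivAt_phiD (ρ := ρ) hx0).comp 0 ((hasDerivAt_id (0:ℝ)).const_add x)
    have hv : (1/(1+(x+0)) - 1/(x+0)) * 1 = -((1-ρ)^2/ρ) := by
      rw [add_zero, mul_one, hxdef]; exact phiD2_xstar hρ0 hρ1
    rw [← hv]; exact H0
  have hD0 : phiD ρ x = 0 := phiD_xstar hρ0 hρ1
  have hF0 : phiF ρ x = 0 := phiF_xstar hρ0 hρ1
  apply HasDerivAt.lhopital_zero_nhdsNE (f' := fun h => phiD ρ (x + h)) (g' := fun h => 2*h)
  · exact eventually_nhdsWithin_of_eventually_nhds (hpos.mono fun h hp => Hf hp)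
  · refine Eventually.of_forall fun h => ?_
    simpa using hasDerivAt_pow 2 h
  · refine eventually_mem_nhdsWithin.mono fun h hh => ?_
    have : h ≠ 0 := hh
    simpa using this
  · have hc : ContinuousAt (fun t => phiF ρ (x + t)) 0 := (Hf (by simpa using hx)).continuousAt
    have h5 : Tendsto (fun t => phiF ρ (x + t)) (𝓝[≠] (0:ℝ)) (𝓝 (phiF ρ (x + 0))) :=
      hc.tendsto.mono_left nhdsWithin_le_nhds
    simpa [hF0] using h5
  · have : Tendsto (fun h : ℝ => h^2) (𝓝 0) (𝓝 0) := by
      simpa using (continuous_pow 2).tendsto (0:ℝ)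
    exact this.mono_left (nhdsWithin_le_nhds (s := {(0:ℝ)}ᶜ))
  · have hslope := HD.tendsto_slope_zero
    simp only [zero_add, add_zero, hD0, smul_eq_mul, sub_zero] at hslope
    have h2 := hslope.const_mul (1/2 : ℝ)
    have hval : -((1-ρ)^2/ρ)/2 = (1/2 : ℝ) * (-((1-ρ)^2/ρ)) := by ring
    rw [hval]
    exact h2.congr fun t => by ring

lemma tendsto_psi {ρ : ℝ} (hρ0 : 0 < ρ) (hρ1 : ρ < 1) :
    Tendsto (fun h => if h = (0:ℝ) then -((1-ρ)^2/ρ)/2 else phiF ρ (ρ/(1-ρ) + h) / h^2)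
      (𝓝 (0:ℝ)) (𝓝 (-((1-ρ)^2/ρ)/2)) := by
  rw [← nhdsNE_sup_pure (0:ℝ), tendsto_sup]
  constructor
  · refine (tendsto_ratio hρ0 hρ1).congr' ?_
    filter_upwards [eventually_mem_nhdsWithin] with h hh
    have : h ≠ 0 := hh
    simp [this]
  · have := tendsto_pure_nhds
      (fun h => if h = (0:ℝ) then -((1-ρ)^2/ρ)/2 else phiF ρ (ρ/(1-ρ) + h) / h^2) 0
    simpa using this

lemma exp_phiF {ρ : ℝ} (hρ0 : 0 < ρ) (hρ1 : ρ < 1) {n A : ℕ} (hn : 1 ≤ n) (hA : 1 ≤ A) :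
    Real.exp ((A:ℝ) * phiF ρ ((n:ℝ)/A)) =
      (1-ρ)^A * ρ^n * ((n:ℝ)+A)^(n+A) / ((n:ℝ)^n * (A:ℝ)^A) := by
  have hn' : (0:ℝ) < n := by exact_mod_cast hn
  have hA' : (0:ℝ) < A := by exact_mod_cast hA
  have h1ρ : (0:ℝ) < 1 - ρ := by linarith
  have step1 : (A:ℝ) * phiF ρ ((n:ℝ)/A) =
      (n:ℝ) * Real.log ρ + ((n+A:ℕ):ℝ) * Real.log ((n:ℝ)+A)
        - (A:ℝ) * Real.log A - (n:ℝ) * Real.log n + (A:ℝ) * Real.log (1-ρ) := by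
    rw [phiF, show (1:ℝ) + (n:ℝ)/A = ((n:ℝ)+A)/A by field_simp; ring,
      Real.log_div (by positivity) (ne_of_gt hA'),
      Real.log_div (ne_of_gt hn') (ne_of_gt hA')]
    push_cast
    field_simp
    ring
  rw [step1]
  rw [Real.exp_add, Real.exp_sub, Real.exp_sub, Real.exp_add,
    Real.exp_nat_mul, Real.exp_nat_mul, Real.exp_nat_mul, Real.exp_nat_mul, Real.exp_nat_mul,
    Real.exp_log hρ0, Real.exp_log (by positivity : (0:ℝ) < (n:ℝ)+A),
    Real.exp_log hA', Real.exp_log hn', Real.exp_log h1ρ]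
  field_simp

lemma key_eq {ρ : ℝ} (hρ0 : 0 < ρ) (hρ1 : ρ < 1) {n A : ℕ} (hn : 1 ≤ n) (hA : 1 ≤ A) :
    Real.sqrt (2*π*A) * Estat ρ A n
      = st (n+A) / (st n * st A) * Real.sqrt (((n:ℝ)+A)/n) * (1-ρ)
        * Real.exp ((A:ℝ) * phiF ρ ((n:ℝ)/A)) := by
  have hn' : (0:ℝ) < n := by exact_mod_cast hn
  have hA' : (0:ℝ) < A := by exact_mod_cast hA
  have hnA' : (0:ℝ) < (n:ℝ) + A := by linarith
  have h1ρ : (0:ℝ) < 1 - ρ := by linarith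
  have hnA : 1 ≤ n + A := le_trans hn (Nat.le_add_right n A)
  have hch : ((n+A).choose n : ℝ) = ((n+A)! : ℝ) / ((n ! : ℝ) * (A ! : ℝ)) := by
    rw [Nat.cast_choose ℝ (Nat.le_add_right n A), Nat.add_sub_cancel_left]
  have hcast : ((n+A:ℕ):ℝ) = (n:ℝ) + A := by push_cast; ring
  have s1 : Real.sqrt (2*π*(A:ℝ)) = Real.sqrt (2*π) * Real.sqrt A := by
    rw [← Real.sqrt_mul (by positivity)]
  have s2 : Real.sqrt (2*π*(n:ℝ)) = Real.sqrt (2*π) * Real.sqrt n := by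
    rw [← Real.sqrt_mul (by positivity)]
  have s3 : Real.sqrt (2*π*((n+A:ℕ):ℝ)) = Real.sqrt (2*π) * Real.sqrt ((n:ℝ)+A) := by
    rw [hcast, ← Real.sqrt_mul (by positivity)]
  have s4 : Real.sqrt (((n:ℝ)+A)/n) = Real.sqrt ((n:ℝ)+A) / Real.sqrt n :=
    Real.sqrt_div (by positivity) _
  have hstn := st_pos hn
  have hstA := st_pos hA
  have hstnA := st_pos hnA
  have hsq2π : (0:ℝ) < Real.sqrt (2*π) := Real.sqrt_pos.mpr (by positivity)
  have hsqn : (0:ℝ) < Real.sqrt n := Real.sqrt_pos.mpr hn'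
  have hsqA : (0:ℝ) < Real.sqrt A := Real.sqrt_pos.mpr hA'
  have hsqnA : (0:ℝ) < Real.sqrt ((n:ℝ)+A) := Real.sqrt_pos.mpr hnA'
  have he : (0:ℝ) < Real.exp 1 := Real.exp_pos 1
  rw [Estat, prod_eq_choose, exp_phiF hρ0 hρ1 hn hA, hch,
    factorial_st hn, factorial_st hA, factorial_st hnA,
    s1, s2, s3, s4, hcast]
  rw [div_pow, div_pow, div_pow, pow_add (Real.exp 1)]
  field_simp
  ring
theorem Estat_local_clt (ρ : ℝ) (hρ0 : 0 < ρ) (hρ1 : ρ < 1) (r : ℝ) :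
    Tendsto
      (fun A : ℕ => Real.sqrt (2 * π * A) *
        Estat ρ A ⌊(A : ℝ) * (ρ / (1 - ρ)) + r * Real.sqrt A⌋₊)
      atTop
      (𝓝 (((1 - ρ) / Real.sqrt ρ) * Real.exp (-((1 - ρ) ^ 2 * r ^ 2 / (2 * ρ))))) := by
  have h1ρ : (0:ℝ) < 1 - ρ := by linarith
  have hXpos : 0 < ρ / (1-ρ) := xstar_pos hρ0 hρ1
  set X := ρ / (1 - ρ) with hXdef
  set nA : ℕ → ℕ := fun A => ⌊(A : ℝ) * X + r * Real.sqrt A⌋₊ with hnAdef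
  set u : ℕ → ℝ := fun A => ((nA A : ℕ) : ℝ) with hudef
  set s : ℕ → ℝ := fun A => (u A - A * X) / Real.sqrt A with hsdef
  set t : ℕ → ℝ := fun A => u A / A - X with htdef
  have hsqN : Tendsto (fun A : ℕ => Real.sqrt (A:ℝ)) atTop atTop := by
    have h := (tendsto_rpow_atTop (by norm_num : (0:ℝ) < 1/2)).comp
      (tendsto_natCast_atTop_atTop (R := ℝ))
    exact h.congr fun A => (Real.sqrt_eq_rpow _).symm
  have hEv : ∀ᶠ A : ℕ in atTop, (1:ℕ) ≤ A ∧ 1 + |r| ≤ Real.sqrt A * X ∧ 1 ≤ Real.sqrt A := by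
    filter_upwards [eventually_ge_atTop 1,
      (hsqN.atTop_mul_const hXpos).eventually_ge_atTop (1 + |r|),
      hsqN.eventually_ge_atTop 1] with A h1 h2 h3
    exact ⟨h1, h2, h3⟩
  have hyfacts : ∀ᶠ A : ℕ in atTop,
      Real.sqrt A ≤ (A:ℝ) * X + r * Real.sqrt A ∧
      u A ≤ (A:ℝ) * X + r * Real.sqrt A ∧
      (A:ℝ) * X + r * Real.sqrt A - 1 < u A := by
    filter_upwards [hEv] with A hE
    obtain ⟨h1, h2, h3⟩ := hE
    have hA0 : (0:ℝ) ≤ (A:ℝ) := Nat.cast_nonneg A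
    have hAA : Real.sqrt A * Real.sqrt A = (A:ℝ) := Real.mul_self_sqrt hA0
    have hy : Real.sqrt A * (Real.sqrt A * X + r) = (A:ℝ) * X + r * Real.sqrt A := by
      rw [mul_add, ← mul_assoc, hAA]; ring
    have hr : -|r| ≤ r := neg_abs_le r
    have hy1 : Real.sqrt A ≤ (A:ℝ) * X + r * Real.sqrt A := by
      rw [← hy]
      calc Real.sqrt A = Real.sqrt A * 1 := (mul_one _).symm
        _ ≤ Real.sqrt A * (Real.sqrt A * X + r) := by
            apply mul_le_mul_of_nonneg_left _ (Real.sqrt_nonneg _)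
            linarith
    have hy0 : (0:ℝ) ≤ (A:ℝ) * X + r * Real.sqrt A := by
      have := Real.sqrt_nonneg (A:ℝ); linarith
    refine ⟨hy1, ?_, ?_⟩
    · simp only [hudef, hnAdef]
      exact Nat.floor_le hy0
    · simp only [hudef, hnAdef]
      have := Nat.lt_floor_add_one ((A:ℝ) * X + r * Real.sqrt A)
      linarith
  have hu_top : Tendsto u atTop atTop := by
    apply tendsto_atTop_mono' atTop ?_ (tendsto_atTop_add_const_right atTop (-1) hsqN)
    filter_upwards [hyfacts] with A hy
    obtain ⟨h1, h2, h3⟩ := hy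
    linarith
  have hnat_top : Tendsto nA atTop atTop := tendsto_natCast_atTop_iff.mp hu_top
  have hnA1 : ∀ᶠ A in atTop, 1 ≤ nA A := hnat_top.eventually_ge_atTop 1
  have hs_sub : Tendsto (fun A => s A - r) atTop (𝓝 0) := by
    apply squeeze_zero_norm' (a := fun A : ℕ => (Real.sqrt A)⁻¹)
    · filter_upwards [hEv, hyfacts] with A hE hy
      obtain ⟨h1, h2, h3⟩ := hE
      obtain ⟨hy1, hy2, hy3⟩ := hy
      have hsA : (0:ℝ) < Real.sqrt A := lt_of_lt_of_le one_pos h3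
      have hrw : s A - r = (u A - ((A:ℝ)*X + r*Real.sqrt A)) / Real.sqrt A := by
        simp only [hsdef]
        field_simp
        ring
      rw [hrw, Real.norm_eq_abs, abs_div, abs_of_pos hsA]
      have hnum : |u A - ((A:ℝ)*X + r*Real.sqrt A)| ≤ 1 :=
        abs_le.mpr ⟨by linarith, by linarith⟩
      rw [inv_eq_one_div]
      gcongr
    · exact hsqN.inv_tendsto_atTop
  have hs : Tendsto s atTop (𝓝 r) := tendsto_sub_nhds_zero_iff.mp hs_sub
  have hst_eq : ∀ᶠ A : ℕ in atTop, Real.sqrt A * t A = s A := by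
    filter_upwards [hEv] with A hE
    obtain ⟨h1, h2, h3⟩ := hE
    have hsA : (0:ℝ) < Real.sqrt A := lt_of_lt_of_le one_pos h3
    have hA' : (0:ℝ) < A := by exact_mod_cast h1
    have hAA : Real.sqrt A * Real.sqrt A = (A:ℝ) := Real.mul_self_sqrt (le_of_lt hA')
    simp only [htdef, hsdef]
    rw [eq_div_iff (ne_of_gt hsA)]
    calc Real.sqrt A * (u A / A - X) * Real.sqrt A
        = (Real.sqrt A * Real.sqrt A) * (u A / A - X) := by ring
      _ = (A:ℝ) * (u A / A - X) := by rw [hAA]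
      _ = u A - A * X := by field_simp
  have ht0 : Tendsto t atTop (𝓝 0) := by
    have hrw : ∀ᶠ A in atTop, s A * (Real.sqrt A)⁻¹ = t A := by
      filter_upwards [hst_eq, hEv] with A h hE
      have hsA : (0:ℝ) < Real.sqrt A := lt_of_lt_of_le one_pos hE.2.2
      rw [← h]
      field_simp
    have hlim : Tendsto (fun A => s A * (Real.sqrt A)⁻¹) atTop (𝓝 (r * 0)) :=
      hs.mul hsqN.inv_tendsto_atTop
    rw [mul_zero] at hlim
    exact hlim.congr' hrw
  have huA : Tendsto (fun A => u A / A) atTop (𝓝 X) := by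
    have h := ht0.add_const X
    rw [zero_add] at h
    refine h.congr fun A => ?_
    ring
  have hInner : Tendsto (fun A : ℕ => (A:ℝ) * phiF ρ (u A / A)) atTop
      (𝓝 (-((1-ρ)^2/ρ)/2 * r^2)) := by
    have hpsi := ((tendsto_psi hρ0 hρ1).comp ht0).mul (hs.pow 2)
    apply hpsi.congr'
    filter_upwards [hEv, hst_eq] with A hE hstA
    obtain ⟨h1, _, h3⟩ := hE
    have hA' : (0:ℝ) < A := by exact_mod_cast h1
    have hXt : X + t A = u A / A := by simp only [htdef]; ring
    simp only [Function.comp, ← hXdef]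
    by_cases ht : t A = 0
    · have hs0 : s A = 0 := by rw [← hstA, ht, mul_zero]
      have huAX : u A / A = X := by rw [← hXt, ht, add_zero]
      rw [if_pos ht, hs0, huAX, phiF_xstar hρ0 hρ1]
      ring
    · have hs2 : (s A)^2 = (A:ℝ) * (t A)^2 := by
        rw [← hstA, mul_pow, Real.sq_sqrt (le_of_lt hA')]
      rw [if_neg ht, hXt, hs2]
      field_simp
  have hexp : Tendsto (fun A : ℕ => Real.exp ((A:ℝ) * phiF ρ (u A / A))) atTop
      (𝓝 (Real.exp (-((1-ρ)^2/ρ)/2 * r^2))) := (Real.continuous_exp.tendsto _).comp hInner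
  have hratio0 : Tendsto (fun A => (u A + A) / u A) atTop (𝓝 ((X+1)/X)) := by
    have hlim : Tendsto (fun A => (u A / A + 1) / (u A / A)) atTop (𝓝 ((X+1)/X)) :=
      (huA.add_const 1).div huA (ne_of_gt hXpos)
    apply hlim.congr'
    filter_upwards [hEv, hnA1] with A hE hn1
    have hA' : (0:ℝ) < A := by exact_mod_cast hE.1
    have hu' : (0:ℝ) < u A := by
      simp only [hudef]
      exact_mod_cast Nat.lt_of_lt_of_le Nat.zero_lt_one hn1
    field_simp
  have hratio : Tendsto (fun A => Real.sqrt ((u A + A)/u A)) atTop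
      (𝓝 (Real.sqrt ((X+1)/X))) := hratio0.sqrt
  have hstn : Tendsto (fun A => st (nA A)) atTop (𝓝 1) := st_tendsto.comp hnat_top
  have hstnA : Tendsto (fun A => st (nA A + A)) atTop (𝓝 1) := st_tendsto.comp
    (tendsto_atTop_mono (fun A => Nat.le_add_left A (nA A)) tendsto_id)
  have hsts : Tendsto (fun A => st (nA A + A) / (st (nA A) * st A)) atTop (𝓝 (1/(1*1))) :=
    hstnA.div (hstn.mul st_tendsto) (by norm_num)
  have hG : Tendsto (fun A => st (nA A + A) / (st (nA A) * st A) *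
      Real.sqrt ((u A + A)/u A) * (1-ρ) * Real.exp ((A:ℝ) * phiF ρ (u A / A))) atTop
      (𝓝 (1/(1*1) * Real.sqrt ((X+1)/X) * (1-ρ) * Real.exp (-((1-ρ)^2/ρ)/2 * r^2))) :=
    ((hsts.mul hratio).mul_const (1-ρ)).mul hexp
  have hfinal : 1/(1*1) * Real.sqrt ((X+1)/X) * (1-ρ) * Real.exp (-((1-ρ)^2/ρ)/2 * r^2)
      = ((1 - ρ) / Real.sqrt ρ) * Real.exp (-((1 - ρ) ^ 2 * r ^ 2 / (2 * ρ))) := by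
    have hXr : (X+1)/X = ρ⁻¹ := by
      rw [div_eq_iff (ne_of_gt hXpos), hXdef]
      field_simp
      ring
    have h2 : -((1-ρ)^2/ρ)/2 * r^2 = -((1 - ρ) ^ 2 * r ^ 2 / (2 * ρ)) := by
      ring
    rw [hXr, Real.sqrt_inv, h2]
    ring
  rw [← hfinal]
  apply hG.congr'
  filter_upwards [hEv, hnA1] with A hE hn1
  exact (key_eq hρ0 hρ1 hn1 hE.1).symm
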